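/- Let p, q : ℕ. On ℂ^p × ℂ^q define the hermitian form h((x,y),(x',y')) = ∑_i conj(x i) * x' i − ∑_j conj(y j) * y' j. For Z ∈ Matrix (Fin p) (Fin q) ℂ let W_Z = {(Z *ᵥ w, w) | w ∈ (Fin q → ℂ)}, a ℂ-subspace of ℂ^p × ℂ^q. Then h(v,v) < 0 for every nonzero v ∈ W_Z (note h(v,v) is automatically real) if and only if the matrix 1 − Zᴴ * Z is positive definite (Matrix.PosDef). -/

import Mathlib

open Matrix
open scoped ComplexOrder

lemma key_quad (p q : ℕ) (Z : Matrix (Fin p) (Fin q) ℂ) (w : Fin q → ℂ) :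
    star w ⬝ᵥ (1 - Z.conjTranspose * Z) *ᵥ w =
    (∑ j, starRingEnd ℂ (w j) * w j) - ∑ i, starRingEnd ℂ ((Z *ᵥ w) i) * ((Z *ᵥ w) i) := by
  have h1 : star w ⬝ᵥ (Z.conjTranspose * Z) *ᵥ w
      = ∑ i, starRingEnd ℂ ((Z *ᵥ w) i) * ((Z *ᵥ w) i) := by
    rw [← mulVec_mulVec, dotProduct_mulVec, ← star_mulVec]
    simp [dotProduct, mul_comm]
  rw [sub_mulVec, dotProduct_sub, one_mulVec, h1]
  simp [dotProduct]

/-- The graph subspace `W_Z = {(Z *ᵥ w, w)}` is negative definite for the hermitian form of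
signature `(p,q)` iff `1 − Zᴴ Z` is positive definite (Harish-Chandra realization of the
bounded symmetric domain of `SU(p,q)`). -/
theorem stmt_4 (p q : ℕ)
    (h : ((Fin p → ℂ) × (Fin q → ℂ)) → ((Fin p → ℂ) × (Fin q → ℂ)) → ℂ)
    (hh : ∀ v v', h v v' =
      (∑ i, starRingEnd ℂ (v.1 i) * v'.1 i) - ∑ j, starRingEnd ℂ (v.2 j) * v'.2 j)
    (Z : Matrix (Fin p) (Fin q) ℂ) :
    (∀ v ∈ {v : (Fin p → ℂ) × (Fin q → ℂ) | ∃ w, v = (Z *ᵥ w, w)},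
        v ≠ 0 → h v v < 0) ↔
    (1 - Z.conjTranspose * Z).PosDef := by
  have herm : (1 - Z.conjTranspose * Z).IsHermitian := by
    apply IsHermitian.sub isHermitian_one
    exact isHermitian_conjTranspose_mul_self Z
  constructor
  · intro H
    refine PosDef.of_dotProduct_mulVec_pos herm (fun w hw => ?_)
    have hv : ((Z *ᵥ w, w) : (Fin p → ℂ) × (Fin q → ℂ)) ≠ 0 := by
      intro hc
      exact hw (congrArg Prod.snd hc)
    have := H (Z *ᵥ w, w) ⟨w, rfl⟩ hv
    rw [hh] at this
    rw [key_quad]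
    simpa using neg_pos.mpr this
  · intro H v hv hv0
    obtain ⟨w, rfl⟩ := hv
    have hw : w ≠ 0 := by
      intro hc; apply hv0; simp [hc]
    have := H.dotProduct_mulVec_pos hw
    rw [key_quad] at this
    rw [hh]
    have h2 : (0:ℂ) < -((∑ i, starRingEnd ℂ ((Z *ᵥ w) i) * ((Z *ᵥ w) i)) - ∑ j, starRingEnd ℂ (w j) * w j) := by simpa [neg_sub] using this
    simpa using neg_pos.mp h2
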